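/- Let (Ω, F, P) be a probability space with a filtration (F_t)_{t ∈ [0,T]}, and let (𝓔_{s,t})_{0 ≤ s ≤ t ≤ T} be a family of operators 𝓔_{s,t} : L²(Ω, F_t, P) → L²(Ω, F_s, P) satisfying monotonicity, 𝓔_{t,t}[ξ] = ξ a.s., and consistency. Then the following two conditions are equivalent: (a) for all 0 ≤ s ≤ t ≤ T, all ξ ∈ L²(Ω, F_t, P) and all A ∈ F_s one has 1_A 𝓔_{s,t}[ξ] = 1_A 𝓔_{s,t}[1_A ξ] a.s., and moreover 𝓔_{s,t}[0] = 0 a.s.; (b) for all 0 ≤ s ≤ t ≤ T, all ξ ∈ L²(Ω, F_t, P) and all A ∈ F_s one has 1_A 𝓔_{s,t}[ξ] = 𝓔_{s,t}[1_A ξ] a.s. -/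

import Mathlib

open MeasureTheory

/-- A family of operators `𝓔_{s,t} : L²(F_t) → L²(F_s)` on `[0, T]` satisfying
monotonicity, `𝓔_{t,t}[ξ] = ξ` and time consistency (axioms (i)–(iii) of
Definition 3.1 of the paper, without the zero-one law). -/
structure PreEvaluation {Ω : Type*} [m0 : MeasurableSpace Ω] (P : Measure Ω) (T : ℝ)
    (F : Filtration ℝ m0) where
  eval : ℝ → ℝ → (Ω → ℝ) → Ω → ℝ
  measurable_eval : ∀ s t ξ, 0 ≤ s → s ≤ t → t ≤ T →
    AEStronglyMeasurable[F t] ξ P → MemLp ξ 2 P →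
    AEStronglyMeasurable[F s] (eval s t ξ) P
  memL2_eval : ∀ s t ξ, 0 ≤ s → s ≤ t → t ≤ T →
    AEStronglyMeasurable[F t] ξ P → MemLp ξ 2 P → MemLp (eval s t ξ) 2 P
  mono : ∀ s t ξ η, 0 ≤ s → s ≤ t → t ≤ T →
    AEStronglyMeasurable[F t] ξ P → MemLp ξ 2 P →
    AEStronglyMeasurable[F t] η P → MemLp η 2 P →
    (∀ᵐ ω ∂P, η ω ≤ ξ ω) → ∀ᵐ ω ∂P, eval s t η ω ≤ eval s t ξ ω
  eval_self : ∀ t ξ, 0 ≤ t → t ≤ T →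
    AEStronglyMeasurable[F t] ξ P → MemLp ξ 2 P → eval t t ξ =ᵐ[P] ξ
  consistent : ∀ r s t ξ, 0 ≤ r → r ≤ s → s ≤ t → t ≤ T →
    AEStronglyMeasurable[F t] ξ P → MemLp ξ 2 P →
    eval r s (eval s t ξ) =ᵐ[P] eval r t ξ

/-- **Remark 3.2 of the paper.** For a family `𝓔_{s,t}` satisfying
monotonicity, `𝓔_{t,t}[ξ] = ξ` and consistency, the following are equivalent:
(a) the zero-one law `1_A 𝓔_{s,t}[ξ] = 1_A 𝓔_{s,t}[1_A ξ]` a.s. for `A ∈ F_s`, together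
with the normalization `𝓔_{s,t}[0] = 0` a.s.;
(b) the strong zero-one law `1_A 𝓔_{s,t}[ξ] = 𝓔_{s,t}[1_A ξ]` a.s. for `A ∈ F_s`. -/
private lemma indicator_aesm' {Ω : Type*} [m0 : MeasurableSpace Ω] {P : Measure Ω}
    {m : MeasurableSpace Ω} {ξ : Ω → ℝ} {A : Set Ω}
    (hξ : AEStronglyMeasurable[m] ξ P) (hA : MeasurableSet[m] A) :
    AEStronglyMeasurable[m] (A.indicator ξ) P := by
  obtain ⟨g, hg, hfg⟩ := hξ
  refine ⟨A.indicator g, hg.indicator hA, hfg.mono fun ω h => ?_⟩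
  simp only [Set.indicator]
  rw [h]

theorem stmt_8 {Ω : Type*} [m0 : MeasurableSpace Ω] (P : Measure Ω) [IsProbabilityMeasure P]
    (T : ℝ) (hT : 0 < T) (F : Filtration ℝ m0) (E : PreEvaluation P T F) :
    ((∀ (s t : ℝ) (ξ : Ω → ℝ) (A : Set Ω), 0 ≤ s → s ≤ t → t ≤ T →
        AEStronglyMeasurable[F t] ξ P → MemLp ξ 2 P → MeasurableSet[F s] A →
        A.indicator (E.eval s t ξ) =ᵐ[P] A.indicator (E.eval s t (A.indicator ξ))) ∧
      (∀ (s t : ℝ), 0 ≤ s → s ≤ t → t ≤ T →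
        E.eval s t (fun _ => (0 : ℝ)) =ᵐ[P] fun _ => (0 : ℝ)))
    ↔
    (∀ (s t : ℝ) (ξ : Ω → ℝ) (A : Set Ω), 0 ≤ s → s ≤ t → t ≤ T →
        AEStronglyMeasurable[F t] ξ P → MemLp ξ 2 P → MeasurableSet[F s] A →
        A.indicator (E.eval s t ξ) =ᵐ[P] E.eval s t (A.indicator ξ)) := by
  constructor
  · rintro ⟨h01, h0⟩ s t ξ A hs hst htT hξm hξ2 hA
    have hAc : MeasurableSet[F s] Aᶜ := hA.compl
    have hAt : MeasurableSet[F t] A := F.mono hst _ hA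
    have hA0 : MeasurableSet A := F.le s _ hA
    have hξAm : AEStronglyMeasurable[F t] (A.indicator ξ) P := indicator_aesm' hξm hAt
    have hξA2 : MemLp (A.indicator ξ) 2 P := hξ2.indicator hA0
    have h1 := h01 s t ξ A hs hst htT hξm hξ2 hA
    have h2 := h01 s t (A.indicator ξ) Aᶜ hs hst htT hξAm hξA2 hAc
    have hz : Aᶜ.indicator (A.indicator ξ) = fun _ => (0 : ℝ) := by
      funext ω
      by_cases h : ω ∈ A <;> simp [Set.indicator, h]
    rw [hz] at h2
    have h3 := h0 s t hs hst htT
    filter_upwards [h1, h2, h3] with ω h1 h2 h3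
    by_cases h : ω ∈ A
    · simpa [Set.indicator, h] using h1
    · have h2' : E.eval s t (A.indicator ξ) ω = E.eval s t (fun _ => (0:ℝ)) ω := by
        simpa [Set.indicator, h] using h2
      simp [Set.indicator, h, h2', h3]
  · intro hb
    constructor
    · intro s t ξ A hs hst htT hξm hξ2 hA
      have hAt : MeasurableSet[F t] A := F.mono hst _ hA
      have hA0 : MeasurableSet A := F.le s _ hA
      have hξAm : AEStronglyMeasurable[F t] (A.indicator ξ) P := indicator_aesm' hξm hAt
      have hξA2 : MemLp (A.indicator ξ) 2 P := hξ2.indicator hA0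
      have h1 := hb s t ξ A hs hst htT hξm hξ2 hA
      have h2 := hb s t (A.indicator ξ) A hs hst htT hξAm hξA2 hA
      rw [Set.indicator_indicator, Set.inter_self] at h2
      exact h1.trans h2.symm
    · intro s t hs hst htT
      have hm : AEStronglyMeasurable[F t] (fun _ : Ω => (0:ℝ)) P :=
        ⟨fun _ => 0, stronglyMeasurable_const, Filter.EventuallyEq.rfl⟩
      have h := hb s t (fun _ => 0) ∅ hs hst htT hm (memLp_const 0)
        (@MeasurableSet.empty Ω (F s))
      rw [Set.indicator_empty, Set.indicator_empty] at h
      exact h.symm.trans (Filter.EventuallyEq.rfl)
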